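/- arXiv:2602.11691 — 2 statements merged into one kernel-verified Lean document; each statement's English description precedes it below -/
import Mathlib

section
/- Single-price optimality under balanced acceptance: let c ∈ ℝᵐ be seller costs and v ∈ ℝⁿ be buyer values, and suppose a price p satisfies: exactly k sellers have cost ≤ p and exactly k buyers have value ≥ p. Then k equals the efficient trade size k* (the largest index ℓ ≤ min(m,n) with v_(ℓ) ≥ c_(ℓ), or 0 if none exists), and hence ∑_{ℓ=1}^{k}(v_(ℓ) − c_(ℓ)) equals the optimal gains-from-trade ∑_{ℓ=1}^{k*}(v_(ℓ) − c_(ℓ)). -/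
/-- The `ℓ`-th largest entry of `v` (1-indexed). -/
noncomputable def kthLargest {n : ℕ} (v : Fin n → ℝ) (k : ℕ) : ℝ :=
  ((List.ofFn v).insertionSort (· ≥ ·)).getD (k - 1) 0

/-- The `ℓ`-th smallest entry of `c` (1-indexed). -/
noncomputable def kthSmallest {n : ℕ} (c : Fin n → ℝ) (k : ℕ) : ℝ :=
  ((List.ofFn c).insertionSort (· ≤ ·)).getD (k - 1) 0

open scoped Classical in
/-- Efficient trade size: the largest `ℓ ≤ min m n` with `v_(ℓ) ≥ c_(ℓ)`, or `0`. -/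
noncomputable def kstar {m n : ℕ} (c : Fin m → ℝ) (v : Fin n → ℝ) : ℕ :=
  ((Finset.Icc 1 (min m n)).filter
    (fun ℓ => kthSmallest c ℓ ≤ kthLargest v ℓ)).sup id

theorem count_ofFn {n : ℕ} (f : Fin n → ℝ) (q : ℝ → Prop) [DecidablePred q] :
    (List.ofFn f).countP (fun x => decide (q x)) = (Finset.univ.filter (fun i => q (f i))).card := by
  rw [List.ofFn_eq_map, List.countP_map, List.countP_eq_length_filter, Finset.card_filter,
    Fin.univ_def]
  simp only [Finset.sum, Multiset.quot_mk_to_coe, Multiset.map_coe, Multiset.sum_coe]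
  generalize List.finRange n = l
  induction l with
  | nil => simp
  | cons a t ih =>
    simp only [List.filter_cons, List.map_cons, List.sum_cons, Function.comp_apply]
    by_cases h : q (f a) <;> simp [h, ih, Nat.add_comm]

theorem sorted_prefix {r : ℝ → ℝ → Prop} (q : ℝ → Prop) [DecidablePred q]
    (hq : ∀ a b, r a b → q b → q a) :
    ∀ (l : List ℝ), l.Pairwise r → ∀ i, i < l.length →
      (q (l.getD i 0) ↔ i < l.countP (fun x => decide (q x))) := by
  intro l
  induction l with
  | nil => intro _ i hi; simp at hi
  | cons a t ih =>
    intro hs i hi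
    rw [List.pairwise_cons] at hs
    by_cases ha : q a
    · have hc : (a :: t).countP (fun x => decide (q x)) = t.countP (fun x => decide (q x)) + 1 := by
        simp [List.countP_cons, ha]
      cases i with
      | zero => simpa [hc] using ha
      | succ j =>
        have hj : j < t.length := by simpa using hi
        simpa [hc, Nat.succ_lt_succ_iff] using ih hs.2 j hj
    · have hall : ∀ b ∈ (a :: t), ¬ q b := by
        intro b hb
        rcases List.mem_cons.1 hb with rfl | hb
        · exact ha
        · exact fun hqb => ha (hq a b (hs.1 b hb) hqb)
      have hc : (a :: t).countP (fun x => decide (q x)) = 0 := by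
        rw [List.countP_eq_zero]
        intro b hb; simpa using hall b hb
      rw [hc]
      simp only [Nat.not_lt_zero, iff_false]
      rw [List.getD_eq_getElem _ _ hi]
      exact hall _ (List.getElem_mem hi)

open scoped Classical in
theorem single_price_optimality {m n : ℕ} (c : Fin m → ℝ) (v : Fin n → ℝ)
    (p : ℝ) (k : ℕ)
    (hs : (Finset.univ.filter (fun i => c i ≤ p)).card = k)
    (hb : (Finset.univ.filter (fun j => p ≤ v j)).card = k) :
    k = kstar c v ∧
      ∑ ℓ ∈ Finset.Icc 1 k, (kthLargest v ℓ - kthSmallest c ℓ) =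
        ∑ ℓ ∈ Finset.Icc 1 (kstar c v), (kthLargest v ℓ - kthSmallest c ℓ) := by
  set C := (List.ofFn c).insertionSort (· ≤ ·) with hCdef
  set V := (List.ofFn v).insertionSort (· ≥ ·) with hVdef
  have hCs : C.Pairwise (· ≤ ·) := List.pairwise_insertionSort _ _
  have hVs : V.Pairwise (· ≥ ·) := List.pairwise_insertionSort _ _
  have hClen : C.length = m := by
    rw [(List.perm_insertionSort _ _).length_eq, List.length_ofFn]
  have hVlen : V.length = n := by
    rw [(List.perm_insertionSort _ _).length_eq, List.length_ofFn]
  have hCcnt : C.countP (fun x => decide (x ≤ p)) = k := by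
    rw [(List.perm_insertionSort _ _).countP_eq, count_ofFn]
    convert hs using 2
  have hVcnt : V.countP (fun x => decide (p ≤ x)) = k := by
    rw [(List.perm_insertionSort _ _).countP_eq, count_ofFn]
    convert hb using 2
  have hC : ∀ i, i < m → (C.getD i 0 ≤ p ↔ i < k) := by
    intro i hi
    have := sorted_prefix (r := (· ≤ ·)) (fun x => x ≤ p)
      (fun a b hab hbp => le_trans hab hbp) C hCs i (hClen ▸ hi)
    rwa [hCcnt] at this
  have hV : ∀ i, i < n → (p ≤ V.getD i 0 ↔ i < k) := by
    intro i hi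
    have := sorted_prefix (r := (· ≥ ·)) (fun x => p ≤ x)
      (fun a b hab hbp => le_trans hbp hab) V hVs i (hVlen ▸ hi)
    rwa [hVcnt] at this
  have hkm : k ≤ m := by
    rw [← hs]
    have := Finset.card_filter_le (Finset.univ : Finset (Fin m)) (fun i => c i ≤ p)
    simpa using this
  have hkn : k ≤ n := by
    rw [← hb]
    have := Finset.card_filter_le (Finset.univ : Finset (Fin n)) (fun j => p ≤ v j)
    simpa using this
  have hsmall : ∀ ℓ, kthSmallest c ℓ = C.getD (ℓ - 1) 0 := fun ℓ => rfl
  have hlarge : ∀ ℓ, kthLargest v ℓ = V.getD (ℓ - 1) 0 := fun ℓ => rfl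
  have hk : k = kstar c v := by
    refine le_antisymm ?_ ?_
    · rcases Nat.eq_zero_or_pos k with rfl | hk0
      · exact Nat.zero_le _
      · have hmem : k ∈ (Finset.Icc 1 (min m n)).filter
            (fun ℓ => kthSmallest c ℓ ≤ kthLargest v ℓ) := by
          refine Finset.mem_filter.2 ⟨Finset.mem_Icc.2 ⟨hk0, le_min hkm hkn⟩, ?_⟩
          have h1 : k - 1 < k := Nat.sub_lt hk0 one_pos
          have hcle : C.getD (k - 1) 0 ≤ p := (hC (k - 1) (lt_of_lt_of_le h1 hkm)).2 h1
          have hvle : p ≤ V.getD (k - 1) 0 := (hV (k - 1) (lt_of_lt_of_le h1 hkn)).2 h1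
          rw [hsmall, hlarge]
          exact le_trans hcle hvle
        exact Finset.le_sup (f := id) hmem
    · refine Finset.sup_le ?_
      intro ℓ hℓ
      rw [Finset.mem_filter, Finset.mem_Icc] at hℓ
      obtain ⟨⟨h1, h2⟩, hcond⟩ := hℓ
      by_contra hlt
      push_neg at hlt
      simp only [id] at hlt
      have hℓ1m : ℓ - 1 < m := by omega
      have hℓ1n : ℓ - 1 < n := by omega
      have hkℓ : ¬ (ℓ - 1 < k) := by omega
      have hc' : ¬ (C.getD (ℓ - 1) 0 ≤ p) := fun h => hkℓ ((hC _ hℓ1m).1 h)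
      have hv' : ¬ (p ≤ V.getD (ℓ - 1) 0) := fun h => hkℓ ((hV _ hℓ1n).1 h)
      rw [hsmall, hlarge] at hcond
      push_neg at hc' hv'
      linarith
  exact ⟨hk, by rw [hk]⟩
end

section
/- Phase-interval lower-bound recurrence: let ε_k = 2^{-2^{k+2}} and suppose a sequence of interval lengths satisfies L_0 = ε_{ℓ-1} and L_i ≥ (1/4)·L_{i-1} − ε_{ℓ+i-1} for all i ≥ 1 (with ℓ ≥ 1). Then for all i ≥ 0, L_i ≥ (1/4)^{i+1}·ε_{ℓ-1}. -/
/-- `eps k = 2^{-2^{k+2}}`. -/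
noncomputable def eps (k : ℕ) : ℝ := (1 / 2 : ℝ) ^ (2 ^ (k + 2))

lemma eps_pos (k : ℕ) : 0 < eps k := by unfold eps; positivity

lemma key_nat (ℓ j : ℕ) (hℓ : 1 ≤ ℓ) :
    j + 2 * (j + 2) + 2 ^ (ℓ + 1) ≤ 2 ^ (ℓ + j + 2) := by
  have h1 : 4 ≤ 2 ^ (ℓ + 1) := by
    calc (4:ℕ) = 2 ^ 2 := by norm_num
    _ ≤ 2 ^ (ℓ + 1) := Nat.pow_le_pow_right (by norm_num) (by omega)
  have h2 : j + 1 ≤ 2 ^ j := Nat.lt_two_pow_self (n := j)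
  have h3 : 2 ^ (ℓ + j + 2) = 2 ^ (ℓ + 1) * 2 ^ (j + 1) := by
    rw [← pow_add]; ring_nf
  have h4 : 2 ^ (j + 1) = 2 * 2 ^ j := by ring
  nlinarith [h1, h2, h3, h4]

lemma key (ℓ j : ℕ) (hℓ : 1 ≤ ℓ) :
    eps (ℓ + j) ≤ (1 / 2 : ℝ) ^ j * (1 / 4 : ℝ) ^ (j + 2) * eps (ℓ - 1) := by
  unfold eps
  have h4 : ((1:ℝ) / 4) = (1 / 2) ^ 2 := by norm_num
  rw [h4, ← pow_mul, ← pow_add, ← pow_add]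
  apply pow_le_pow_of_le_one (by norm_num) (by norm_num)
  have : ℓ - 1 + 2 = ℓ + 1 := by omega
  rw [this]
  have := key_nat ℓ j hℓ
  omega

theorem phase_interval_lower_bound (ℓ : ℕ) (hℓ : 1 ≤ ℓ) (L : ℕ → ℝ)
    (h0 : L 0 = eps (ℓ - 1))
    (hrec : ∀ i : ℕ, 1 ≤ i → L i ≥ L (i - 1) / 4 - eps (ℓ + i - 1)) :
    ∀ i : ℕ, L i ≥ (1 / 4 : ℝ) ^ (i + 1) * eps (ℓ - 1) := by
  have hε := eps_pos (ℓ - 1)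
  have main : ∀ i : ℕ, L i ≥ (2 + 2 * (1 / 2 : ℝ) ^ i) * (1 / 4 : ℝ) ^ (i + 1) * eps (ℓ - 1) := by
    intro i
    induction i with
    | zero => rw [h0]; norm_num
    | succ j ih =>
      have hr := hrec (j + 1) (by omega)
      have heq : ℓ + (j + 1) - 1 = ℓ + j := by omega
      rw [heq] at hr
      simp only [Nat.add_sub_cancel] at hr
      have hk := key ℓ j hℓ
      have e1 : (1 / 4 : ℝ) ^ (j + 1 + 1) = (1 / 4 : ℝ) ^ (j + 2) := by ring_nf
      have e2 : (1 / 4 : ℝ) ^ (j + 2) = (1 / 4 : ℝ) ^ (j + 1) * (1 / 4) := by ring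
      have e3 : (1 / 2 : ℝ) ^ (j + 1) = (1 / 2 : ℝ) ^ j * (1 / 2) := by ring
      rw [e1, e2, e3]
      rw [e2] at hk
      nlinarith [ih, hr, hk, hε]
  intro i
  have h1 : (1 / 4 : ℝ) ^ (i + 1) * eps (ℓ - 1)
      ≤ (2 + 2 * (1 / 2 : ℝ) ^ i) * (1 / 4 : ℝ) ^ (i + 1) * eps (ℓ - 1) := by
    have hp : (0:ℝ) < (1 / 4 : ℝ) ^ (i + 1) := by positivity
    have hq : (0:ℝ) ≤ (1 / 2 : ℝ) ^ i := by positivity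
    nlinarith [mul_pos hp hε, mul_nonneg (mul_nonneg hq hp.le) hε.le]
  linarith [main i]
end
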